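/- Let (Ȳ,Z̄,V) be random variables over finite alphabets with joint pmf p'(ȳ,v)·∏_{m=1}^{M'} q'_m(z_m|y_m). Then for every nonempty set I ⊆ {1,…,M'}: I(Ȳ_I;Z̄_I|Z̄_{I^c},V) ≤ Σ_{i∈I} I(Y_i;Z_i|Z̄_{{1,…,i−1}},V). -/

import Mathlib

open Finset
open scoped Classical

noncomputable section

/-- The distribution (pmf) of the random variable `X` under the pmf `P` on the finite
sample space `Ω`. -/
def dist {Ω α : Type*} [Fintype Ω] [Fintype α] (P : Ω → ℝ) (X : Ω → α) (a : α) : ℝ :=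
  ∑ ω, if X ω = a then P ω else 0

/-- Shannon entropy (base 2) of the random variable `X` under the pmf `P`. -/
def Hent {Ω α : Type*} [Fintype Ω] [Fintype α] (P : Ω → ℝ) (X : Ω → α) : ℝ :=
  -∑ a, dist P X a * Real.logb 2 (dist P X a)

/-- Conditional entropy `H(X | Y)`. -/
def condEnt {Ω α β : Type*} [Fintype Ω] [Fintype α] [Fintype β]
    (P : Ω → ℝ) (X : Ω → α) (Y : Ω → β) : ℝ :=
  Hent P (fun ω => (X ω, Y ω)) - Hent P Y

/-- Conditional mutual information `I(X ; Y | Z)`. -/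
def condMI {Ω α β γ : Type*} [Fintype Ω] [Fintype α] [Fintype β] [Fintype γ]
    (P : Ω → ℝ) (X : Ω → α) (Y : Ω → β) (Z : Ω → γ) : ℝ :=
  Hent P (fun ω => (X ω, Z ω)) + Hent P (fun ω => (Y ω, Z ω))
    - Hent P (fun ω => (X ω, Y ω, Z ω)) - Hent P Z

/-- The ε-strongly typical set condition for a sequence `xs` with respect to pmf `p`:
`|N(a|xs)/n − p(a)| < ε/|α|` for every letter `a`. -/
def StronglyTypical {α : Type*} [Fintype α] (p : α → ℝ) {n : ℕ} (xs : Fin n → α)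
    (ε : ℝ) : Prop :=
  ∀ a : α, |((Finset.univ.filter fun k => xs k = a).card : ℝ) / n - p a|
    < ε / Fintype.card α

section YZV

variable {M' : ℕ}

/-- Canonical sample space for `(Ȳ, Z̄, V)`. -/
abbrev Samp (𝒴 𝒵 : Fin M' → Type*) (V : Type*) : Type _ :=
  (∀ i, 𝒴 i) × (∀ i, 𝒵 i) × V

variable {𝒴 𝒵 : Fin M' → Type*} [∀ i, Fintype (𝒴 i)] [∀ i, Fintype (𝒵 i)]
  {V : Type*} [Fintype V]

/-- The joint pmf `p'(ȳ,v) · ∏ₘ q'ₘ(zₘ | yₘ)` on the canonical sample space: conditionally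
on `(Ȳ,V)` the `Zₘ` are mutually independent and `Zₘ` depends only on `Yₘ`. -/
def Pjoint (p' : (∀ i, 𝒴 i) × V → ℝ) (q : ∀ m, 𝒴 m → 𝒵 m → ℝ) :
    Samp 𝒴 𝒵 V → ℝ :=
  fun ω => p' (ω.1, ω.2.2) * ∏ m, q m (ω.1 m) (ω.2.1 m)

/-- `Ȳ_I`. -/
def Ybar (I : Finset (Fin M')) : Samp 𝒴 𝒵 V → (∀ i : I, 𝒴 i.1) := fun ω i => ω.1 i.1

/-- `Z̄_I`. -/
def Zbar (I : Finset (Fin M')) : Samp 𝒴 𝒵 V → (∀ i : I, 𝒵 i.1) := fun ω i => ω.2.1 i.1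

/-- The pair `(Z̄_I, V)` used as a conditioning variable. -/
def ZbarV (I : Finset (Fin M')) : Samp 𝒴 𝒵 V → (∀ i : I, 𝒵 i.1) × V :=
  fun ω => (fun i => ω.2.1 i.1, ω.2.2)

/-- Membership in the region `B*`: `I(Ȳ_I; Z̄_I | Z̄_{Iᶜ}, V) ≤ Σ_{i∈I} R_i` for every
nonempty `I ⊆ {1,…,M'}`. -/
def memBstar (p' : (∀ i, 𝒴 i) × V → ℝ) (q : ∀ m, 𝒴 m → 𝒵 m → ℝ)
    (R : Fin M' → ℝ) : Prop :=
  ∀ I : Finset (Fin M'), I.Nonempty →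
    condMI (Pjoint p' q) (Ybar I) (Zbar I) (ZbarV Iᶜ) ≤ ∑ i ∈ I, R i

end YZV

section Generic
variable {Ω α β γ : Type*} [Fintype Ω] [Fintype α] [Fintype β] [Fintype γ]
variable {P : Ω → ℝ}

lemma dist_nonneg' (hP : ∀ ω, 0 ≤ P ω) (X : Ω → α) (a : α) : 0 ≤ dist P X a :=
  Finset.sum_nonneg fun ω _ => by split <;> [exact hP ω; exact le_rfl]

lemma dist_comp (X : Ω → α) (f : α → β) (b : β) :
    _root_.dist P (fun ω => f (X ω)) b = ∑ a, if f a = b then _root_.dist P X a else 0 := by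
  rw [eq_comm]
  calc ∑ a, (if f a = b then _root_.dist P X a else 0)
      = ∑ a, ∑ ω, (if f a = b then (if X ω = a then P ω else 0) else 0) := by
        refine Finset.sum_congr rfl fun a _ => ?_
        split <;> simp [_root_.dist]
    _ = ∑ ω, ∑ a, (if f a = b then (if X ω = a then P ω else 0) else 0) := Finset.sum_comm
    _ = ∑ ω, (if f (X ω) = b then P ω else 0) := by
        refine Finset.sum_congr rfl fun ω _ => ?_
        rw [Finset.sum_eq_single (X ω)]
        · simp
        · intro a _ ha; simp [Ne.symm ha]
        · simp
    _ = _root_.dist P (fun ω => f (X ω)) b := rfl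

lemma sum_dist (X : Ω → α) : ∑ a, _root_.dist P X a = ∑ ω, P ω := by
  unfold _root_.dist
  rw [Finset.sum_comm]
  exact Finset.sum_congr rfl fun ω _ => by simp

lemma le_dist_comp (hP : ∀ ω, 0 ≤ P ω) (X : Ω → α) (f : α → β) (a : α) :
    dist P X a ≤ dist P (fun ω => f (X ω)) (f a) := by
  conv_rhs => rw [dist_comp]
  have h := Finset.single_le_sum (f := fun a' => if f a' = f a then _root_.dist P X a' else 0)
    (fun a' _ => by split <;> [exact dist_nonneg' hP X a'; exact le_rfl])
    (Finset.mem_univ a)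
  simp only [if_pos rfl] at h
  exact h

lemma Hent_comp_eq (X : Ω → α) (f : α → β) :
    Hent P (fun ω => f (X ω)) =
      -∑ a, _root_.dist P X a * Real.logb 2 (_root_.dist P (fun ω => f (X ω)) (f a)) := by
  unfold Hent
  congr 1
  calc ∑ b, _root_.dist P (fun ω => f (X ω)) b * Real.logb 2 (_root_.dist P (fun ω => f (X ω)) b)
      = ∑ b, ∑ a, (if f a = b then _root_.dist P X a * Real.logb 2 (_root_.dist P (fun ω => f (X ω)) b) else 0) := by
        refine Finset.sum_congr rfl fun b _ => ?_
        rw [dist_comp X f b, Finset.sum_mul]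
        exact Finset.sum_congr rfl fun a _ => by split <;> simp
    _ = ∑ a, ∑ b, (if f a = b then _root_.dist P X a * Real.logb 2 (_root_.dist P (fun ω => f (X ω)) b) else 0) := Finset.sum_comm
    _ = ∑ a, _root_.dist P X a * Real.logb 2 (_root_.dist P (fun ω => f (X ω)) (f a)) := by
        refine Finset.sum_congr rfl fun a _ => ?_
        rw [Finset.sum_eq_single (f a)] <;> simp +contextual [eq_comm]

lemma Hent_comp_le (hP : ∀ ω, 0 ≤ P ω) (X : Ω → α) (f : α → β) :
    Hent P (fun ω => f (X ω)) ≤ Hent P X := by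
  rw [Hent_comp_eq X f]
  unfold Hent
  rw [neg_le_neg_iff]
  refine Finset.sum_le_sum fun a _ => ?_
  rcases eq_or_lt_of_le (dist_nonneg' hP X a) with h | h
  · rw [← h]; simp
  · have h2 := le_dist_comp hP X f a
    have := Real.logb_le_logb_of_le (by norm_num : (1:ℝ) < 2) h h2
    nlinarith

lemma Hent_congr (hP : ∀ ω, 0 ≤ P ω) (X : Ω → α) (Y : Ω → β) (f : α → β) (g : β → α)
    (hf : ∀ ω, f (X ω) = Y ω) (hg : ∀ ω, g (Y ω) = X ω) : Hent P X = Hent P Y := by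
  have h1 : Hent P Y = Hent P (fun ω => f (X ω)) := by
    congr 1; funext ω; exact (hf ω).symm
  have h2 : Hent P X = Hent P (fun ω => g (Y ω)) := by
    congr 1; funext ω; exact (hg ω).symm
  have := Hent_comp_le hP X f
  have := Hent_comp_le hP Y g
  rw [h1, h2] at *
  linarith

end Generic

section CMI
variable {Ω α β γ : Type*} [Fintype Ω] [Fintype α] [Fintype β] [Fintype γ]
variable {P : Ω → ℝ}

lemma sum_dist_fst (X : Ω → α) (Z : Ω → γ) (z : γ) :
    ∑ x, _root_.dist P (fun ω => (X ω, Z ω)) (x, z) = _root_.dist P Z z := by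
  unfold _root_.dist
  rw [Finset.sum_comm]
  refine Finset.sum_congr rfl fun ω _ => ?_
  simp only [Prod.mk.injEq]
  rw [Finset.sum_eq_single (X ω)]
  · simp
  · intro x _ hx; simp [Ne.symm hx]
  · simp

lemma condMI_nonneg (hP : ∀ ω, 0 ≤ P ω) (X : Ω → α) (Y : Ω → β) (Z : Ω → γ) :
    0 ≤ condMI P X Y Z := by
  set T : Ω → α × β × γ := fun ω => (X ω, Y ω, Z ω) with hT
  set p : α × β × γ → ℝ := _root_.dist P T with hp
  set d13 : α × γ → ℝ := _root_.dist P (fun ω => (X ω, Z ω)) with hd13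
  set d23 : β × γ → ℝ := _root_.dist P (fun ω => (Y ω, Z ω)) with hd23
  set dZ : γ → ℝ := _root_.dist P Z with hdZ
  set b : α × β × γ → ℝ := fun t => d13 (t.1, t.2.2) * d23 t.2 / dZ t.2.2 with hb
  set F : α × β × γ → ℝ := fun t =>
    p t * Real.logb 2 (p t) + p t * Real.logb 2 (dZ t.2.2)
      - p t * Real.logb 2 (d13 (t.1, t.2.2)) - p t * Real.logb 2 (d23 t.2) with hF
  have H13 : Hent P (fun ω => (X ω, Z ω)) = -∑ t, p t * Real.logb 2 (d13 (t.1, t.2.2)) :=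
    Hent_comp_eq T (fun s => (s.1, s.2.2))
  have H23 : Hent P (fun ω => (Y ω, Z ω)) = -∑ t, p t * Real.logb 2 (d23 t.2) :=
    Hent_comp_eq T (fun s => s.2)
  have HZ : Hent P Z = -∑ t, p t * Real.logb 2 (dZ t.2.2) :=
    Hent_comp_eq T (fun s => s.2.2)
  have H123 : Hent P T = -∑ t, p t * Real.logb 2 (p t) := rfl
  have hsum : condMI P X Y Z = ∑ t, F t := by
    have e : ∑ t, F t = (∑ t, p t * Real.logb 2 (p t)) + (∑ t, p t * Real.logb 2 (dZ t.2.2))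
        - (∑ t, p t * Real.logb 2 (d13 (t.1, t.2.2))) - (∑ t, p t * Real.logb 2 (d23 t.2)) := by
      rw [hF]
      rw [Finset.sum_sub_distrib, Finset.sum_sub_distrib, Finset.sum_add_distrib]
    rw [condMI, H13, H23, HZ]
    have : Hent P (fun ω => (X ω, Y ω, Z ω)) = -∑ t, p t * Real.logb 2 (p t) := H123
    rw [this, e]
    ring
  have hb_nonneg : ∀ t, 0 ≤ b t := fun t =>
    div_nonneg (mul_nonneg (dist_nonneg' hP _ _) (dist_nonneg' hP _ _)) (dist_nonneg' hP _ _)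
  have hterm : ∀ t, (p t - b t) / Real.log 2 ≤ F t := by
    intro t
    have hlog2 : (0:ℝ) < Real.log 2 := Real.log_pos (by norm_num)
    rcases eq_or_lt_of_le (dist_nonneg' hP T t) with h0 | h0
    · have hp0 : p t = 0 := h0.symm
      have : F t = 0 := by simp [hF, hp0]
      rw [this, hp0]
      have : (0 : ℝ) - b t ≤ 0 := by linarith [hb_nonneg t]
      exact div_nonpos_of_nonpos_of_nonneg this hlog2.le |>.trans_eq rfl |>.trans le_rfl
    · have h13 : 0 < d13 (t.1, t.2.2) :=
        lt_of_lt_of_le h0 (le_dist_comp hP T (fun s => (s.1, s.2.2)) t)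
      have h23 : 0 < d23 t.2 := lt_of_lt_of_le h0 (le_dist_comp hP T (fun s => s.2) t)
      have hZ : 0 < dZ t.2.2 := lt_of_lt_of_le h0 (le_dist_comp hP T (fun s => s.2.2) t)
      set r : ℝ := p t * dZ t.2.2 / (d13 (t.1, t.2.2) * d23 t.2) with hr
      have hrpos : 0 < r := by positivity
      have hF' : F t = p t * Real.log r / Real.log 2 := by
        simp only [hF, Real.logb, hr]
        rw [Real.log_div (by positivity) (by positivity), Real.log_mul h0.ne' hZ.ne',
          Real.log_mul h13.ne' h23.ne']
        ring
      have hlog : 1 - r⁻¹ ≤ Real.log r := by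
        have := Real.log_le_sub_one_of_pos (inv_pos.2 hrpos)
        rw [Real.log_inv] at this
        linarith
      have hinv : p t * r⁻¹ = b t := by
        rw [hr, hb]
        have hpne : p t ≠ 0 := h0.ne'
        field_simp
      have hnum : p t - b t ≤ p t * Real.log r := by
        have h1 : p t * (1 - r⁻¹) ≤ p t * Real.log r := by
          exact mul_le_mul_of_nonneg_left hlog h0.le
        have h2 : p t * (1 - r⁻¹) = p t - b t := by rw [mul_sub, hinv]; ring
        linarith
      rw [hF']
      exact (div_le_div_iff_of_pos_right hlog2).mpr hnum
  have hsumb : ∑ t, b t = ∑ t, p t := by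
    have hZsum : ∀ z, ∑ x, d13 (x, z) = dZ z := fun z => sum_dist_fst X Z z
    have hZsum2 : ∀ z, ∑ y, d23 (y, z) = dZ z := fun z => sum_dist_fst Y Z z
    have hb' : ∑ t : α × β × γ, b t = ∑ t : α × β × γ, d13 (t.1, t.2.2) * d23 t.2 / dZ t.2.2 :=
      Finset.sum_congr rfl fun t _ => by rw [hb]
    rw [hb']
    calc ∑ t : α × β × γ, d13 (t.1, t.2.2) * d23 t.2 / dZ t.2.2
        = ∑ x, ∑ y, ∑ z, d13 (x, z) * d23 (y, z) / dZ z := by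
          simp only [Fintype.sum_prod_type]
      _ = ∑ x, ∑ z, ∑ y, d13 (x, z) * d23 (y, z) / dZ z :=
          Finset.sum_congr rfl fun x _ => Finset.sum_comm
      _ = ∑ z, ∑ x, ∑ y, d13 (x, z) * d23 (y, z) / dZ z := Finset.sum_comm
      _ = ∑ z, (∑ x, d13 (x, z)) * (∑ y, d23 (y, z)) / dZ z := by
          refine Finset.sum_congr rfl fun z _ => ?_
          rw [Finset.sum_mul, Finset.sum_div]
          refine Finset.sum_congr rfl fun x _ => ?_
          rw [Finset.mul_sum, Finset.sum_div]
      _ = ∑ z, dZ z := by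
          refine Finset.sum_congr rfl fun z _ => ?_
          rw [hZsum, hZsum2]
          rcases eq_or_lt_of_le (dist_nonneg' hP Z z) with h | h
          · have h0 : dZ z = 0 := h.symm
            rw [h0]; simp
          · have h0 : dZ z ≠ 0 := by exact ne_of_gt h
            rw [mul_div_assoc, div_self h0, mul_one]
      _ = ∑ ω, P ω := sum_dist Z
      _ = ∑ t, p t := (sum_dist T).symm
  have hfin : 0 ≤ ∑ t, F t := by
    have h1 : ∑ t, (p t - b t) / Real.log 2 ≤ ∑ t, F t := Finset.sum_le_sum fun t _ => hterm t
    have h2 : ∑ t, (p t - b t) / Real.log 2 = ((∑ t, p t) - ∑ t, b t) / Real.log 2 := by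
      rw [← Finset.sum_div, Finset.sum_sub_distrib]
    rw [h2, hsumb, sub_self, zero_div] at h1
    exact h1
  rw [hsum]
  exact hfin

end CMI

section NFdefs

variable {M' : ℕ} {𝒴 𝒵 : Fin M' → Type*} [∀ i, Fintype (𝒴 i)] [∀ i, Fintype (𝒵 i)]
  {V : Type*} [Fintype V]

/-- Masked (normal-form) encoding of `Ȳ_S`. -/
def NFy (S : Finset (Fin M')) : Samp 𝒴 𝒵 V → (∀ m, Option (𝒴 m)) :=
  fun ω m => if m ∈ S then some (ω.1 m) else none

/-- Masked (normal-form) encoding of `Z̄_T`. -/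
def NFz (T : Finset (Fin M')) : Samp 𝒴 𝒵 V → (∀ m, Option (𝒵 m)) :=
  fun ω m => if m ∈ T then some (ω.2.1 m) else none

/-- Normal form of the triple `(Ȳ_S, Z̄_T, V)`. -/
def NF (S T : Finset (Fin M')) :
    Samp 𝒴 𝒵 V → (∀ m, Option (𝒴 m)) × (∀ m, Option (𝒵 m)) × V :=
  fun ω => (NFy S ω, NFz T ω, ω.2.2)

/-- Set the `i`-th coordinate of a masked vector. -/
def setOpt {α : Fin M' → Type*} (w : ∀ m, Option (α m)) (i : Fin M') (x : α i) :
    ∀ m, Option (α m) :=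
  fun m => if h : m = i then some (h ▸ x) else w m

lemma setOpt_same {α : Fin M' → Type*} (w : ∀ m, Option (α m)) (i : Fin M') (x : α i) :
    setOpt w i x i = some x := by simp [setOpt]

lemma setOpt_ne {α : Fin M' → Type*} (w : ∀ m, Option (α m)) {i m : Fin M'} (x : α i)
    (h : m ≠ i) : setOpt w i x m = w m := by simp [setOpt, h]

end NFdefs

section Congr

variable {M' : ℕ} {𝒴 𝒵 : Fin M' → Type*} [∀ i, Fintype (𝒴 i)] [∀ i, Fintype (𝒵 i)]
  {V : Type*} [Fintype V]
variable {P : Samp 𝒴 𝒵 V → ℝ} (hP : ∀ ω, 0 ≤ P ω) (d𝒴 : ∀ i, 𝒴 i) (d𝒵 : ∀ i, 𝒵 i)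

include hP d𝒴 d𝒵

-- A4/B4
lemma congr_A4 (T : Finset (Fin M')) :
    Hent P (ZbarV T) = Hent P (NF (∅ : Finset (Fin M')) T) := by
  refine Hent_congr hP _ _
    (fun x => (fun _ => none, fun m => if h : m ∈ T then some (x.1 ⟨m, h⟩) else none, x.2))
    (fun w => (fun i => (w.2.1 i.1).getD (d𝒵 i.1), w.2.2)) (fun ω => ?_) (fun ω => ?_)
  · refine Prod.ext ?_ (Prod.ext ?_ rfl)
    · funext m; simp [NF, NFy]
    · funext m; by_cases h : m ∈ T <;> simp [NF, NFz, ZbarV, h]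
  · refine Prod.ext ?_ rfl
    funext i; simp [NF, NFz, ZbarV, i.2]

-- A1
lemma congr_A1 (S T : Finset (Fin M')) :
    Hent P (fun ω => (Ybar S ω, ZbarV T ω)) = Hent P (NF S T) := by
  refine Hent_congr hP _ _
    (fun x => (fun m => if h : m ∈ S then some (x.1 ⟨m, h⟩) else none,
               fun m => if h : m ∈ T then some (x.2.1 ⟨m, h⟩) else none, x.2.2))
    (fun w => (fun i => (w.1 i.1).getD (d𝒴 i.1),
               fun i => (w.2.1 i.1).getD (d𝒵 i.1), w.2.2)) (fun ω => ?_) (fun ω => ?_)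
  · refine Prod.ext ?_ (Prod.ext ?_ rfl)
    · funext m; by_cases h : m ∈ S <;> simp [NF, NFy, Ybar, h]
    · funext m; by_cases h : m ∈ T <;> simp [NF, NFz, ZbarV, h]
  · refine Prod.ext ?_ (Prod.ext ?_ rfl)
    · funext i; simp [NF, NFy, Ybar, i.2]
    · funext i; simp [NF, NFz, ZbarV, i.2]

-- A2
lemma congr_A2 (A B : Finset (Fin M')) :
    Hent P (fun ω => (Zbar A ω, ZbarV B ω)) = Hent P (NF (∅ : Finset (Fin M')) (A ∪ B)) := by
  refine Hent_congr hP _ _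
    (fun x => (fun _ => none,
               fun m => if h : m ∈ A then some (x.1 ⟨m, h⟩)
                  else if h : m ∈ B then some (x.2.1 ⟨m, h⟩) else none, x.2.2))
    (fun w => (fun i => (w.2.1 i.1).getD (d𝒵 i.1),
               fun i => (w.2.1 i.1).getD (d𝒵 i.1), w.2.2)) (fun ω => ?_) (fun ω => ?_)
  · refine Prod.ext ?_ (Prod.ext ?_ rfl)
    · funext m; simp [NF, NFy]
    · funext m
      by_cases hA : m ∈ A
      · simp [NF, NFz, Zbar, hA, Finset.mem_union]
      · by_cases hB : m ∈ B <;>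
          simp [NF, NFz, ZbarV, hA, hB, Finset.mem_union]
  · refine Prod.ext ?_ (Prod.ext ?_ rfl)
    · funext i
      have : i.1 ∈ A ∪ B := Finset.mem_union_left _ i.2
      simp [NF, NFz, Zbar, this]
    · funext i
      have : i.1 ∈ A ∪ B := Finset.mem_union_right _ i.2
      simp [NF, NFz, ZbarV, this]

-- A3
lemma congr_A3 (S A B : Finset (Fin M')) :
    Hent P (fun ω => (Ybar S ω, Zbar A ω, ZbarV B ω)) = Hent P (NF S (A ∪ B)) := by
  refine Hent_congr hP _ _
    (fun x => (fun m => if h : m ∈ S then some (x.1 ⟨m, h⟩) else none,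
               fun m => if h : m ∈ A then some (x.2.1 ⟨m, h⟩)
                  else if h : m ∈ B then some (x.2.2.1 ⟨m, h⟩) else none, x.2.2.2))
    (fun w => (fun i => (w.1 i.1).getD (d𝒴 i.1),
               fun i => (w.2.1 i.1).getD (d𝒵 i.1),
               fun i => (w.2.1 i.1).getD (d𝒵 i.1), w.2.2)) (fun ω => ?_) (fun ω => ?_)
  · refine Prod.ext ?_ (Prod.ext ?_ rfl)
    · funext m; by_cases h : m ∈ S <;> simp [NF, NFy, Ybar, h]
    · funext m
      by_cases hA : m ∈ A
      · simp [NF, NFz, Zbar, hA, Finset.mem_union]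
      · by_cases hB : m ∈ B <;>
          simp [NF, NFz, ZbarV, hA, hB, Finset.mem_union]
  · refine Prod.ext ?_ (Prod.ext ?_ (Prod.ext ?_ rfl))
    · funext i; simp [NF, NFy, Ybar, i.2]
    · funext i
      have : i.1 ∈ A ∪ B := Finset.mem_union_left _ i.2
      simp [NF, NFz, Zbar, this]
    · funext i
      have : i.1 ∈ A ∪ B := Finset.mem_union_right _ i.2
      simp [NF, NFz, ZbarV, this]

-- B1 : (Y_i, Z̄_L, V)
lemma congr_B1 (i : Fin M') (L : Finset (Fin M')) :
    Hent P (fun ω => (ω.1 i, ZbarV L ω)) = Hent P (NF ({i} : Finset (Fin M')) L) := by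
  refine Hent_congr hP _ _
    (fun x => (setOpt (fun _ => none) i x.1,
               fun m => if h : m ∈ L then some (x.2.1 ⟨m, h⟩) else none, x.2.2))
    (fun w => ((w.1 i).getD (d𝒴 i),
               fun j => (w.2.1 j.1).getD (d𝒵 j.1), w.2.2)) (fun ω => ?_) (fun ω => ?_)
  · refine Prod.ext ?_ (Prod.ext ?_ rfl)
    · funext m
      by_cases h : m = i
      · subst h; simp [NF, NFy, setOpt]
      · simp [NF, NFy, setOpt, h, Finset.mem_singleton]
    · funext m; by_cases h : m ∈ L <;> simp [NF, NFz, ZbarV, h]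
  · refine Prod.ext ?_ (Prod.ext ?_ rfl)
    · simp [NF, NFy]
    · funext j; simp [NF, NFz, ZbarV, j.2]

-- B2 : (Z_i, Z̄_L, V)
lemma congr_B2 (i : Fin M') (L : Finset (Fin M')) (hiL : i ∉ L) :
    Hent P (fun ω => (ω.2.1 i, ZbarV L ω)) = Hent P (NF (∅ : Finset (Fin M')) (insert i L)) := by
  refine Hent_congr hP _ _
    (fun x => (fun _ => none,
               setOpt (fun m => if h : m ∈ L then some (x.2.1 ⟨m, h⟩) else none) i x.1, x.2.2))
    (fun w => ((w.2.1 i).getD (d𝒵 i),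
               fun j => (w.2.1 j.1).getD (d𝒵 j.1), w.2.2)) (fun ω => ?_) (fun ω => ?_)
  · refine Prod.ext ?_ (Prod.ext ?_ rfl)
    · funext m; simp [NF, NFy]
    · funext m
      by_cases h : m = i
      · subst h; simp [NF, NFz, setOpt, Finset.mem_insert]
      · by_cases hL : m ∈ L <;>
          simp [NF, NFz, ZbarV, setOpt, h, hL, Finset.mem_insert]
  · refine Prod.ext ?_ (Prod.ext ?_ rfl)
    · simp [NF, NFz, Finset.mem_insert]
    · funext j
      have : j.1 ∈ insert i L := Finset.mem_insert_of_mem j.2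
      simp [NF, NFz, ZbarV, this]

-- B3 : (Y_i, Z_i, Z̄_L, V)
lemma congr_B3 (i : Fin M') (L : Finset (Fin M')) (hiL : i ∉ L) :
    Hent P (fun ω => (ω.1 i, ω.2.1 i, ZbarV L ω))
      = Hent P (NF ({i} : Finset (Fin M')) (insert i L)) := by
  refine Hent_congr hP _ _
    (fun x => (setOpt (fun _ => none) i x.1,
               setOpt (fun m => if h : m ∈ L then some (x.2.2.1 ⟨m, h⟩) else none) i x.2.1,
               x.2.2.2))
    (fun w => ((w.1 i).getD (d𝒴 i), (w.2.1 i).getD (d𝒵 i),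
               fun j => (w.2.1 j.1).getD (d𝒵 j.1), w.2.2)) (fun ω => ?_) (fun ω => ?_)
  · refine Prod.ext ?_ (Prod.ext ?_ rfl)
    · funext m
      by_cases h : m = i
      · subst h; simp [NF, NFy, setOpt]
      · simp [NF, NFy, setOpt, h, Finset.mem_singleton]
    · funext m
      by_cases h : m = i
      · subst h; simp [NF, NFz, setOpt, Finset.mem_insert]
      · by_cases hL : m ∈ L <;>
          simp [NF, NFz, ZbarV, setOpt, h, hL, Finset.mem_insert]
  · refine Prod.ext ?_ (Prod.ext ?_ (Prod.ext ?_ rfl))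
    · simp [NF, NFy]
    · simp [NF, NFz, Finset.mem_insert]
    · funext j
      have : j.1 ∈ insert i L := Finset.mem_insert_of_mem j.2
      simp [NF, NFz, ZbarV, this]

-- c1 : (Z_i, NF S T) ≅ NF S (insert i T)
lemma congr_c1 (i : Fin M') (S T : Finset (Fin M')) (hiT : i ∉ T) :
    Hent P (fun ω => (ω.2.1 i, NF S T ω)) = Hent P (NF S (insert i T)) := by
  refine Hent_congr hP _ _
    (fun x => (x.2.1, setOpt x.2.2.1 i x.1, x.2.2.2))
    (fun w => ((w.2.1 i).getD (d𝒵 i),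
               w.1, fun m => if m = i then none else w.2.1 m, w.2.2)) (fun ω => ?_) (fun ω => ?_)
  · refine Prod.ext rfl (Prod.ext ?_ rfl)
    funext m
    by_cases h : m = i
    · subst h; simp [NF, NFz, setOpt, Finset.mem_insert]
    · simp [NF, NFz, setOpt, h, Finset.mem_insert]
  · refine Prod.ext ?_ (Prod.ext rfl (Prod.ext ?_ rfl))
    · simp [NF, NFz, Finset.mem_insert]
    · funext m
      by_cases h : m = i
      · subst h; simp [NF, NFz, hiT]
      · simp [NF, NFz, h, Finset.mem_insert]

-- c2 : (NFz D, NF S T) ≅ NF S (D ∪ T)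
lemma congr_c2 (D S T : Finset (Fin M')) :
    Hent P (fun ω => (NFz D ω, NF S T ω)) = Hent P (NF S (D ∪ T)) := by
  refine Hent_congr hP _ _
    (fun x => (x.2.1, fun m => if m ∈ D then x.1 m else x.2.2.1 m, x.2.2.2))
    (fun w => (fun m => if m ∈ D then w.2.1 m else none,
               w.1, fun m => if m ∈ T then w.2.1 m else none, w.2.2)) (fun ω => ?_) (fun ω => ?_)
  · refine Prod.ext rfl (Prod.ext ?_ rfl)
    funext m
    by_cases hD : m ∈ D <;> by_cases hT : m ∈ T <;>
      simp [NF, NFz, hD, hT, Finset.mem_union]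
  · refine Prod.ext ?_ (Prod.ext rfl (Prod.ext ?_ rfl))
    · funext m
      by_cases hD : m ∈ D <;>
        simp [NF, NFz, hD, Finset.mem_union]
    · funext m
      by_cases hT : m ∈ T <;>
        simp [NF, NFz, hT, Finset.mem_union]

-- c3 : (Z_i, NFz D, NF S T) ≅ NF S (insert i (D ∪ T))
lemma congr_c3 (i : Fin M') (D S T : Finset (Fin M')) (hiDT : i ∉ D ∪ T) :
    Hent P (fun ω => (ω.2.1 i, NFz D ω, NF S T ω)) = Hent P (NF S (insert i (D ∪ T))) := by
  refine Hent_congr hP _ _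
    (fun x => (x.2.2.1,
               setOpt (fun m => if m ∈ D then x.2.1 m else x.2.2.2.1 m) i x.1, x.2.2.2.2))
    (fun w => ((w.2.1 i).getD (d𝒵 i),
               fun m => if m ∈ D then w.2.1 m else none,
               w.1, fun m => if m ∈ T then w.2.1 m else none, w.2.2)) (fun ω => ?_) (fun ω => ?_)
  · refine Prod.ext rfl (Prod.ext ?_ rfl)
    funext m
    by_cases h : m = i
    · subst h; simp [NF, NFz, setOpt, Finset.mem_insert]
    · by_cases hD : m ∈ D <;> by_cases hT : m ∈ T <;>
        simp [NF, NFz, setOpt, h, hD, hT, Finset.mem_insert, Finset.mem_union]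
  · have hiD : i ∉ D := fun h => hiDT (Finset.mem_union_left _ h)
    have hiT : i ∉ T := fun h => hiDT (Finset.mem_union_right _ h)
    refine Prod.ext ?_ (Prod.ext ?_ (Prod.ext rfl (Prod.ext ?_ rfl)))
    · simp [NF, NFz, Finset.mem_insert]
    · funext m
      by_cases hD : m ∈ D
      · have : m ∈ insert i (D ∪ T) := Finset.mem_insert_of_mem (Finset.mem_union_left _ hD)
        simp [NF, NFz, hD, this]
      · simp [NF, NFz, hD]
    · funext m
      by_cases hT : m ∈ T
      · have : m ∈ insert i (D ∪ T) := Finset.mem_insert_of_mem (Finset.mem_union_right _ hT)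
        simp [NF, NFz, hT, this]
      · simp [NF, NFz, hT]

end Congr

section CI

variable {Ω α κ γ : Type*} [Fintype Ω] [Fintype α] [Fintype κ] [Fintype γ]

/-- If the joint distribution of `(Zi, W)` factorizes through a kernel `r` applied to a
statistic `yOf` of `W`, then `H(Zi, W) = H(W) + E[h(r(Y))]`. -/
lemma Hent_pair_eq_of_fac (P : Ω → ℝ) (Zi : Ω → α) (W : Ω → γ) (YI : Ω → κ)
    (yOf : γ → κ) (r : κ → α → ℝ) (hr1 : ∀ y, ∑ z, r y z = 1)
    (hY : ∀ ω, yOf (W ω) = YI ω)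
    (hfac : ∀ z w, _root_.dist P (fun ω => (Zi ω, W ω)) (z, w)
        = r (yOf w) z * _root_.dist P W w) :
    Hent P (fun ω => (Zi ω, W ω))
      = Hent P W + ∑ y, _root_.dist P YI y * (-∑ z, r y z * Real.logb 2 (r y z)) := by
  set dW := _root_.dist P W with hdW
  have key : ∀ z w, _root_.dist P (fun ω => (Zi ω, W ω)) (z, w)
      * Real.logb 2 (_root_.dist P (fun ω => (Zi ω, W ω)) (z, w))
      = r (yOf w) z * (dW w * Real.logb 2 (dW w))
        + dW w * (r (yOf w) z * Real.logb 2 (r (yOf w) z)) := by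
    intro z w
    rw [hfac]
    rcases eq_or_ne (r (yOf w) z) 0 with h | h
    · simp [h]
    rcases eq_or_ne (dW w) 0 with h' | h'
    · simp [h']
    · rw [Real.logb_mul h h']
      ring
  have e1 : Hent P (fun ω => (Zi ω, W ω))
      = -∑ w, ∑ z, (r (yOf w) z * (dW w * Real.logb 2 (dW w))
          + dW w * (r (yOf w) z * Real.logb 2 (r (yOf w) z))) := by
    rw [Hent]
    congr 1
    rw [Fintype.sum_prod_type]
    rw [Finset.sum_comm]
    exact Finset.sum_congr rfl fun w _ => Finset.sum_congr rfl fun z _ => key z w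
  rw [e1]
  have e2 : ∀ w, ∑ z, (r (yOf w) z * (dW w * Real.logb 2 (dW w))
      + dW w * (r (yOf w) z * Real.logb 2 (r (yOf w) z)))
      = dW w * Real.logb 2 (dW w) + dW w * (∑ z, r (yOf w) z * Real.logb 2 (r (yOf w) z)) := by
    intro w
    rw [Finset.sum_add_distrib, ← Finset.sum_mul, hr1, one_mul, ← Finset.mul_sum]
  rw [Finset.sum_congr rfl fun w _ => e2 w, Finset.sum_add_distrib]
  have e3 : ∑ w, dW w * (∑ z, r (yOf w) z * Real.logb 2 (r (yOf w) z))
      = ∑ y, _root_.dist P YI y * (∑ z, r y z * Real.logb 2 (r y z)) := by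
    have hYI : ∀ y, _root_.dist P YI y = ∑ w, if yOf w = y then dW w else 0 := by
      intro y
      have : _root_.dist P (fun ω => yOf (W ω)) y = ∑ w, if yOf w = y then dW w else 0 :=
        dist_comp W yOf y
      rw [← this]
      congr 1
      funext ω
      rw [hY ω]
    calc ∑ w, dW w * (∑ z, r (yOf w) z * Real.logb 2 (r (yOf w) z))
        = ∑ w, ∑ y, (if yOf w = y then dW w * (∑ z, r y z * Real.logb 2 (r y z)) else 0) := by
          refine Finset.sum_congr rfl fun w _ => ?_
          rw [Finset.sum_eq_single (yOf w)] <;> simp +contextual [eq_comm]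
      _ = ∑ y, ∑ w, (if yOf w = y then dW w * (∑ z, r y z * Real.logb 2 (r y z)) else 0) :=
          Finset.sum_comm
      _ = ∑ y, _root_.dist P YI y * (∑ z, r y z * Real.logb 2 (r y z)) := by
          refine Finset.sum_congr rfl fun y _ => ?_
          rw [hYI, Finset.sum_mul]
          refine Finset.sum_congr rfl fun w _ => ?_
          split <;> simp
  rw [e3, Hent]
  have : ∑ y, _root_.dist P YI y * (-∑ z, r y z * Real.logb 2 (r y z))
      = -∑ y, _root_.dist P YI y * (∑ z, r y z * Real.logb 2 (r y z)) := by
    rw [← Finset.sum_neg_distrib]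
    exact Finset.sum_congr rfl fun y _ => by ring
  rw [this]
  ring

end CI

section Fac

variable {M' : ℕ} {𝒴 𝒵 : Fin M' → Type*} [∀ i, Fintype (𝒴 i)] [∀ i, Fintype (𝒵 i)]
  {V : Type*} [Fintype V]
variable (p' : (∀ i, 𝒴 i) × V → ℝ) (q : ∀ m, 𝒴 m → 𝒵 m → ℝ)

lemma sum_pi_constrained (hq1 : ∀ m y, ∑ z, q m y z = 1) (y : ∀ m, 𝒴 m)
    (T : Finset (Fin M')) (zt : ∀ m, 𝒵 m) :
    (∑ zb : ∀ m, 𝒵 m, if (∀ m ∈ T, zb m = zt m) then ∏ m, q m (y m) (zb m) else 0)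
      = ∏ m ∈ T, q m (y m) (zt m) := by
  have step1 : ∀ zb : ∀ m, 𝒵 m,
      (if (∀ m ∈ T, zb m = zt m) then ∏ m, q m (y m) (zb m) else 0)
        = ∏ m, (if m ∈ T then (if zb m = zt m then q m (y m) (zb m) else 0)
            else q m (y m) (zb m)) := by
    intro zb
    by_cases h : ∀ m ∈ T, zb m = zt m
    · rw [if_pos h]
      refine Finset.prod_congr rfl fun m _ => ?_
      by_cases hm : m ∈ T
      · rw [if_pos hm, if_pos (h m hm)]
      · rw [if_neg hm]
    · rw [if_neg h]
      push_neg at h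
      obtain ⟨m, hmT, hm⟩ := h
      refine (Finset.prod_eq_zero (Finset.mem_univ m) ?_).symm
      rw [if_pos hmT, if_neg hm]
  rw [Finset.sum_congr rfl fun zb _ => step1 zb]
  rw [(Fintype.prod_sum (fun m t => if m ∈ T then (if t = zt m then q m (y m) t else 0)
    else q m (y m) t)).symm]
  have step3 : ∀ m, (∑ t, (if m ∈ T then (if t = zt m then q m (y m) t else 0)
      else q m (y m) t)) = (if m ∈ T then q m (y m) (zt m) else 1) := by
    intro m
    by_cases hm : m ∈ T
    · simp only [if_pos hm]
      rw [Finset.sum_ite_eq' Finset.univ (zt m) (fun t => q m (y m) t)]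
      simp
    · simp only [if_neg hm]
      exact hq1 m (y m)
  rw [Finset.prod_congr rfl fun m _ => step3 m, ← Finset.prod_filter]
  congr 1
  simp

lemma core_sum (hq1 : ∀ m y, ∑ z, q m y z = 1) (S T : Finset (Fin M'))
    (ys : ∀ m, 𝒴 m) (zs : ∀ m, 𝒵 m) (v₀ : V) :
    (∑ ω : Samp 𝒴 𝒵 V,
        if ((∀ m ∈ S, ω.1 m = ys m) ∧ (∀ m ∈ T, ω.2.1 m = zs m) ∧ ω.2.2 = v₀)
          then Pjoint p' q ω else 0)
      = ∑ yb : ∀ m, 𝒴 m,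
          if (∀ m ∈ S, yb m = ys m) then p' (yb, v₀) * ∏ m ∈ T, q m (yb m) (zs m) else 0 := by
  rw [Fintype.sum_prod_type]
  refine Finset.sum_congr rfl fun yb _ => ?_
  rw [Fintype.sum_prod_type]
  simp only [ite_and, Pjoint]
  by_cases hA : ∀ m ∈ S, yb m = ys m
  · simp only [if_pos hA]
    have inner : ∀ zb : ∀ m, 𝒵 m,
        (∑ v, if (∀ m ∈ T, zb m = zs m) then (if v = v₀ then
            p' (yb, v) * ∏ m, q m (yb m) (zb m) else 0) else 0)
          = (if (∀ m ∈ T, zb m = zs m) then p' (yb, v₀) * ∏ m, q m (yb m) (zb m) else 0) := by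
      intro zb
      by_cases hB : ∀ m ∈ T, zb m = zs m <;> simp [hB]
    rw [Finset.sum_congr rfl fun zb _ => inner zb]
    have pull : ∀ zb : ∀ m, 𝒵 m,
        (if (∀ m ∈ T, zb m = zs m) then p' (yb, v₀) * ∏ m, q m (yb m) (zb m) else 0)
          = p' (yb, v₀) * (if (∀ m ∈ T, zb m = zs m) then ∏ m, q m (yb m) (zb m) else 0) := by
      intro zb; split <;> simp
    rw [Finset.sum_congr rfl fun zb _ => pull zb, ← Finset.mul_sum,
      sum_pi_constrained q hq1 yb T zs]
  · simp [hA]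

end Fac

section Fac2
set_option linter.unusedSectionVars false

variable {M' : ℕ} {𝒴 𝒵 : Fin M' → Type*} [∀ i, Fintype (𝒴 i)] [∀ i, Fintype (𝒵 i)]
  {V : Type*} [Fintype V]
variable (p' : (∀ i, 𝒴 i) × V → ℝ) (q : ∀ m, 𝒴 m → 𝒵 m → ℝ)

lemma NF_eq_iff (S T : Finset (Fin M')) (ω ω₀ : Samp 𝒴 𝒵 V) :
    NF S T ω = NF S T ω₀
      ↔ ((∀ m ∈ S, ω.1 m = ω₀.1 m) ∧ (∀ m ∈ T, ω.2.1 m = ω₀.2.1 m) ∧ ω.2.2 = ω₀.2.2) := by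
  constructor
  · intro h
    have h1 := congrArg Prod.fst h
    have h2 := congrArg (fun x => x.2.1) h
    have h3 := congrArg (fun x => x.2.2) h
    refine ⟨fun m hm => ?_, fun m hm => ?_, h3⟩
    · have := congrFun h1 m
      simpa [NF, NFy, hm] using this
    · have := congrFun h2 m
      simpa [NF, NFz, hm] using this
  · rintro ⟨h1, h2, h3⟩
    refine Prod.ext ?_ (Prod.ext ?_ h3)
    · funext m
      by_cases hm : m ∈ S <;> simp [NF, NFy, hm, h1 m]
    · funext m
      by_cases hm : m ∈ T <;> simp [NF, NFz, hm, h2 m]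

lemma pair_eq_iff (i : Fin M') (S T : Finset (Fin M')) (hiT : i ∉ T) (z : 𝒵 i)
    (ω ω₀ : Samp 𝒴 𝒵 V) :
    (ω.2.1 i, NF S T ω) = (z, NF S T ω₀)
      ↔ ((∀ m ∈ S, ω.1 m = ω₀.1 m)
          ∧ (∀ m ∈ insert i T, ω.2.1 m = Function.update ω₀.2.1 i z m) ∧ ω.2.2 = ω₀.2.2) := by
  rw [Prod.mk.injEq, NF_eq_iff]
  constructor
  · rintro ⟨hz, h1, h2, h3⟩
    refine ⟨h1, fun m hm => ?_, h3⟩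
    rcases Finset.mem_insert.mp hm with h | h
    · subst h; rw [Function.update_self]; exact hz
    · rw [Function.update_of_ne (fun (he : m = i) => hiT (he ▸ h))]
      exact h2 m h
  · rintro ⟨h1, h2, h3⟩
    refine ⟨?_, h1, fun m hm => ?_, h3⟩
    · have := h2 i (Finset.mem_insert_self i T)
      rwa [Function.update_self] at this
    · have := h2 m (Finset.mem_insert_of_mem hm)
      rwa [Function.update_of_ne (fun (he : m = i) => hiT (he ▸ hm))] at this

lemma dist_NF (hq1 : ∀ m y, ∑ z, q m y z = 1) (S T : Finset (Fin M')) (ω₀ : Samp 𝒴 𝒵 V) :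
    _root_.dist (Pjoint p' q) (NF S T) (NF S T ω₀)
      = ∑ yb : ∀ m, 𝒴 m,
          if (∀ m ∈ S, yb m = ω₀.1 m)
            then p' (yb, ω₀.2.2) * ∏ m ∈ T, q m (yb m) (ω₀.2.1 m) else 0 := by
  have : _root_.dist (Pjoint p' q) (NF S T) (NF S T ω₀)
      = ∑ ω : Samp 𝒴 𝒵 V,
          if ((∀ m ∈ S, ω.1 m = ω₀.1 m) ∧ (∀ m ∈ T, ω.2.1 m = ω₀.2.1 m) ∧ ω.2.2 = ω₀.2.2)
            then Pjoint p' q ω else 0 := by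
    refine Finset.sum_congr rfl fun ω _ => ?_
    simp only [NF_eq_iff]
  rw [this, core_sum p' q hq1]

lemma dist_NF_pair (hq1 : ∀ m y, ∑ z, q m y z = 1) (i : Fin M') (S T : Finset (Fin M'))
    (hiT : i ∉ T) (z : 𝒵 i) (ω₀ : Samp 𝒴 𝒵 V) :
    _root_.dist (Pjoint p' q) (fun ω => (ω.2.1 i, NF S T ω)) (z, NF S T ω₀)
      = ∑ yb : ∀ m, 𝒴 m,
          if (∀ m ∈ S, yb m = ω₀.1 m)
            then p' (yb, ω₀.2.2)
              * (q i (yb i) z * ∏ m ∈ T, q m (yb m) (ω₀.2.1 m)) else 0 := by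
  have e1 : _root_.dist (Pjoint p' q) (fun ω => (ω.2.1 i, NF S T ω)) (z, NF S T ω₀)
      = ∑ ω : Samp 𝒴 𝒵 V,
          if ((∀ m ∈ S, ω.1 m = ω₀.1 m)
              ∧ (∀ m ∈ insert i T, ω.2.1 m = Function.update ω₀.2.1 i z m) ∧ ω.2.2 = ω₀.2.2)
            then Pjoint p' q ω else 0 := by
    refine Finset.sum_congr rfl fun ω _ => ?_
    simp only [pair_eq_iff i S T hiT]
  rw [e1, core_sum p' q hq1]
  refine Finset.sum_congr rfl fun yb _ => ?_
  by_cases hA : ∀ m ∈ S, yb m = ω₀.1 m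
  · rw [if_pos hA, if_pos hA]
    congr 1
    rw [Finset.prod_insert hiT, Function.update_self]
    congr 1
    refine Finset.prod_congr rfl fun m hm => ?_
    rw [Function.update_of_ne (fun (he : m = i) => hiT (he ▸ hm))]
  · rw [if_neg hA, if_neg hA]

lemma hfac_NF (hq1 : ∀ m y, ∑ z, q m y z = 1) (d𝒴 : ∀ i, 𝒴 i) (i : Fin M')
    (S T : Finset (Fin M')) (hiS : i ∈ S) (hiT : i ∉ T) (z : 𝒵 i)
    (w : (∀ m, Option (𝒴 m)) × (∀ m, Option (𝒵 m)) × V) :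
    _root_.dist (Pjoint p' q) (fun ω => (ω.2.1 i, NF S T ω)) (z, w)
      = q i ((w.1 i).getD (d𝒴 i)) z * _root_.dist (Pjoint p' q) (NF S T) w := by
  by_cases hw : ∃ ω₀ : Samp 𝒴 𝒵 V, NF S T ω₀ = w
  · obtain ⟨ω₀, rfl⟩ := hw
    have hyOf : (((NF S T ω₀ : _).1 i).getD (d𝒴 i)) = ω₀.1 i := by
      simp [NF, NFy, hiS]
    rw [hyOf, dist_NF_pair p' q hq1 i S T hiT z ω₀, dist_NF p' q hq1 S T ω₀,
      Finset.mul_sum]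
    refine Finset.sum_congr rfl fun yb _ => ?_
    by_cases hA : ∀ m ∈ S, yb m = ω₀.1 m
    · rw [if_pos hA, if_pos hA, hA i hiS]
      ring
    · rw [if_neg hA, if_neg hA, mul_zero]
  · push_neg at hw
    have h1 : _root_.dist (Pjoint p' q) (NF S T) w = 0 :=
      Finset.sum_eq_zero fun ω _ => if_neg (hw ω)
    have h2 : _root_.dist (Pjoint p' q) (fun ω => (ω.2.1 i, NF S T ω)) (z, w) = 0 :=
      Finset.sum_eq_zero fun ω _ => if_neg (fun hc => hw ω (congrArg Prod.snd hc))
    rw [h1, h2, mul_zero]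

end Fac2


/-- Lemma B.7 (le:last) of the paper: for every nonempty `I ⊆ {1,…,M'}`,
`I(Ȳ_I; Z̄_I | Z̄_{Iᶜ}, V) ≤ Σ_{i∈I} I(Y_i; Z_i | Z̄_{{1,…,i−1}}, V)`. -/
theorem statement_9 (M' : ℕ) (𝒴 𝒵 : Fin M' → Type) [∀ i, Fintype (𝒴 i)]
    [∀ i, Fintype (𝒵 i)] (V : Type) [Fintype V]
    (p' : (∀ i, 𝒴 i) × V → ℝ) (q : ∀ m, 𝒴 m → 𝒵 m → ℝ)
    (hp'0 : ∀ yv, 0 ≤ p' yv) (hp'1 : ∑ yv, p' yv = 1)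
    (hq0 : ∀ m y z, 0 ≤ q m y z) (hq1 : ∀ m y, ∑ z, q m y z = 1)
    (I : Finset (Fin M')) (hI : I.Nonempty) :
    condMI (Pjoint p' q) (Ybar I) (Zbar I) (ZbarV Iᶜ)
      ≤ ∑ i ∈ I,
          condMI (Pjoint p' q)
            (fun ω : Samp 𝒴 𝒵 V => ω.1 i)
            (fun ω : Samp 𝒴 𝒵 V => ω.2.1 i)
            (ZbarV (Finset.univ.filter fun j : Fin M' => j < i)) := by
  set P : Samp 𝒴 𝒵 V → ℝ := Pjoint p' q with hPdef
  have hP : ∀ ω, 0 ≤ P ω := fun ω =>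
    mul_nonneg (hp'0 _) (Finset.prod_nonneg fun m _ => hq0 m _ _)
  by_cases hNE : Nonempty (Samp 𝒴 𝒵 V)
  case neg =>
    have hE : IsEmpty (Samp 𝒴 𝒵 V) := not_nonempty_iff.mp hNE
    have hH : ∀ {α : Type} [Fintype α] (X : Samp 𝒴 𝒵 V → α), Hent P X = 0 := by
      intro α _ X
      have hd : ∀ a, _root_.dist P X a = 0 := fun a => by
        rw [_root_.dist, Finset.univ_eq_empty, Finset.sum_empty]
      simp [Hent, hd]
    have hc : ∀ {α β γ : Type} [Fintype α] [Fintype β] [Fintype γ]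
        (X : Samp 𝒴 𝒵 V → α) (Y : Samp 𝒴 𝒵 V → β) (Z : Samp 𝒴 𝒵 V → γ),
        condMI P X Y Z = 0 := by
      intro α β γ _ _ _ X Y Z
      rw [condMI, hH, hH, hH, hH]; ring
    rw [hc]
    rw [Finset.sum_congr rfl fun i _ => hc _ _ _]
    simp
  case pos =>
    obtain ⟨ω₀⟩ := hNE
    set d𝒴 : ∀ i, 𝒴 i := fun i => ω₀.1 i with hd𝒴
    set d𝒵 : ∀ i, 𝒵 i := fun i => ω₀.2.1 i with hd𝒵
    set L : Fin M' → Finset (Fin M') :=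
      fun i => Finset.univ.filter (fun j : Fin M' => j < i) with hLdef
    set HH : Finset (Fin M') → Finset (Fin M') → ℝ := fun S T => Hent P (NF S T) with hHH
    set c : Fin M' → ℝ := fun i =>
      ∑ y, _root_.dist P (fun ω => ω.1 i) y * (-∑ z, q i y z * Real.logb 2 (q i y z)) with hc
    -- conditional independence step
    have CIstep : ∀ (S T : Finset (Fin M')) (i : Fin M'), i ∈ S → i ∉ T →
        HH S (insert i T) = HH S T + c i := by
      intro S T i hiS hiT
      have h1 := congr_c1 hP d𝒴 d𝒵 i S T hiT
      have h2 := Hent_pair_eq_of_fac P (fun ω => ω.2.1 i) (NF S T) (fun ω => ω.1 i)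
        (fun w => (w.1 i).getD (d𝒴 i)) (q i) (hq1 i)
        (fun ω => by simp [NF, NFy, hiS])
        (fun z w => hfac_NF p' q hq1 d𝒴 i S T hiS hiT z w)
      show Hent P (NF S (insert i T)) = Hent P (NF S T) + c i
      rw [← h1, h2]
    -- submodularity step
    have SUBstep : ∀ (T T' : Finset (Fin M')) (i : Fin M'), T ⊆ T' → i ∉ T' →
        HH ∅ (insert i T') - HH ∅ T' ≤ HH ∅ (insert i T) - HH ∅ T := by
      intro T T' i hTT hiT'
      have hiT : i ∉ T := fun h => hiT' (hTT h)
      have hDT : (T' \ T) ∪ T = T' := Finset.sdiff_union_of_subset hTT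
      have h0 := condMI_nonneg hP (fun ω => ω.2.1 i) (NFz (T' \ T))
        (NF (∅ : Finset (Fin M')) T)
      have h0' : 0 ≤ Hent P (fun ω => (ω.2.1 i, NF (∅ : Finset (Fin M')) T ω))
          + Hent P (fun ω => (NFz (T' \ T) ω, NF (∅ : Finset (Fin M')) T ω))
          - Hent P (fun ω => (ω.2.1 i, NFz (T' \ T) ω, NF (∅ : Finset (Fin M')) T ω))
          - Hent P (NF (∅ : Finset (Fin M')) T) := h0
      have e1 : Hent P (fun ω => (ω.2.1 i, NF (∅ : Finset (Fin M')) T ω))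
          = HH ∅ (insert i T) := congr_c1 hP d𝒴 d𝒵 i ∅ T hiT
      have e2 : Hent P (fun ω => (NFz (T' \ T) ω, NF (∅ : Finset (Fin M')) T ω))
          = HH ∅ T' := by
        rw [congr_c2 hP d𝒴 d𝒵 (T' \ T) ∅ T, hDT]
      have e3 : Hent P (fun ω => (ω.2.1 i, NFz (T' \ T) ω, NF (∅ : Finset (Fin M')) T ω))
          = HH ∅ (insert i T') := by
        rw [congr_c3 hP d𝒴 d𝒵 i (T' \ T) ∅ T (by rw [hDT]; exact hiT'), hDT]
      have e4 : Hent P (NF (∅ : Finset (Fin M')) T) = HH ∅ T := rfl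
      rw [e1, e2, e3, e4] at h0'
      linarith
    -- chain rule over K for conditional independence
    have chain1 : ∀ K : Finset (Fin M'), K ⊆ I → HH I (Iᶜ ∪ K) = HH I Iᶜ + ∑ i ∈ K, c i := by
      intro K
      induction K using Finset.induction_on with
      | empty => intro _; simp
      | @insert j K hjK ih =>
        intro hsub
        have hjI : j ∈ I := hsub (Finset.mem_insert_self j K)
        have hKI : K ⊆ I := (Finset.subset_insert j K).trans hsub
        have hjnot : j ∉ Iᶜ ∪ K := by
          simp only [Finset.mem_union, Finset.mem_compl, not_or, not_not]
          exact ⟨hjI, hjK⟩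
        rw [Finset.union_insert, CIstep I (Iᶜ ∪ K) j hjI hjnot, ih hKI,
          Finset.sum_insert hjK]
        ring
    -- chained submodularity
    have chain2 : ∀ n (K : Finset (Fin M')), K.card = n → K ⊆ I →
        (∀ j ∈ I, ∀ k ∈ K, j < k → j ∈ K) →
        HH ∅ (Iᶜ ∪ K) - HH ∅ Iᶜ ≤ ∑ i ∈ K, (HH ∅ (insert i (L i)) - HH ∅ (L i)) := by
      intro n
      induction n with
      | zero =>
        intro K hcard _ _
        rw [Finset.card_eq_zero.mp hcard]
        simp
      | succ n ih =>
        intro K hcard hKI hdc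
        have hKne : K.Nonempty := Finset.card_pos.mp (by omega)
        set i : Fin M' := K.max' hKne with hidef
        have hiK : i ∈ K := K.max'_mem hKne
        set K' : Finset (Fin M') := K.erase i with hK'def
        have hcard' : K'.card = n := by
          rw [hK'def, Finset.card_erase_of_mem hiK, hcard]
          omega
        have hK'I : K' ⊆ I := (Finset.erase_subset _ _).trans hKI
        have hdc' : ∀ j ∈ I, ∀ k ∈ K', j < k → j ∈ K' := by
          intro j hj k hk hlt
          have hkK : k ∈ K := Finset.mem_of_mem_erase hk
          have hjK : j ∈ K := hdc j hj k hkK hlt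
          have hji : j ≠ i := ne_of_lt (lt_of_lt_of_le hlt (K.le_max' k hkK))
          exact Finset.mem_erase.mpr ⟨hji, hjK⟩
        have hins : Iᶜ ∪ K = insert i (Iᶜ ∪ K') := by
          rw [hK'def, ← Finset.union_insert, Finset.insert_erase hiK]
        have hiI : i ∈ I := hKI hiK
        have hinotin : i ∉ Iᶜ ∪ K' := by
          simp only [Finset.mem_union, Finset.mem_compl, not_or, not_not, hK'def]
          exact ⟨hiI, fun h => (Finset.mem_erase.mp h).1 rfl⟩
        have hLsub : L i ⊆ Iᶜ ∪ K' := by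
          intro j hj
          have hji : j < i := by
            rw [hLdef] at hj
            simpa using hj
          by_cases hjI : j ∈ I
          · exact Finset.mem_union_right _
              (Finset.mem_erase.mpr ⟨ne_of_lt hji, hdc j hjI i hiK hji⟩)
          · exact Finset.mem_union_left _ (Finset.mem_compl.mpr hjI)
        have hstep := SUBstep (L i) (Iᶜ ∪ K') i hLsub hinotin
        have hih := ih K' hcard' hK'I hdc'
        have hsum : ∑ i' ∈ K, (HH ∅ (insert i' (L i')) - HH ∅ (L i'))
            = (HH ∅ (insert i (L i)) - HH ∅ (L i))
              + ∑ i' ∈ K', (HH ∅ (insert i' (L i')) - HH ∅ (L i')) := by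
          exact (Finset.add_sum_erase K
            (fun i' => HH ∅ (insert i' (L i')) - HH ∅ (L i')) hiK).symm
        rw [hins, hsum]
        linarith
    -- identify the LHS
    have hA1 : Hent P (fun ω => (Ybar I ω, ZbarV Iᶜ ω)) = HH I Iᶜ :=
      congr_A1 hP d𝒴 d𝒵 I Iᶜ
    have hA2 : Hent P (fun ω => (Zbar I ω, ZbarV Iᶜ ω)) = HH ∅ Finset.univ := by
      rw [congr_A2 hP d𝒴 d𝒵 I Iᶜ]
      rw [hHH, Finset.union_compl]
    have hA3 : Hent P (fun ω => (Ybar I ω, Zbar I ω, ZbarV Iᶜ ω)) = HH I Finset.univ := by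
      rw [congr_A3 hP d𝒴 d𝒵 I I Iᶜ]
      rw [hHH, Finset.union_compl]
    have hA4 : Hent P (ZbarV Iᶜ) = HH ∅ Iᶜ := congr_A4 hP d𝒴 d𝒵 Iᶜ
    have hIu : HH I Finset.univ = HH I Iᶜ + ∑ i ∈ I, c i := by
      have := chain1 I (subset_refl I)
      rwa [Finset.union_comm, Finset.union_compl] at this
    have LHSeq : condMI P (Ybar I) (Zbar I) (ZbarV Iᶜ)
        = HH ∅ Finset.univ - HH ∅ Iᶜ - ∑ i ∈ I, c i := by
      rw [condMI, hA1, hA2, hA3, hA4, hIu]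
      ring
    -- identify the RHS terms
    have RHSterm : ∀ i ∈ I, condMI P (fun ω : Samp 𝒴 𝒵 V => ω.1 i)
        (fun ω : Samp 𝒴 𝒵 V => ω.2.1 i) (ZbarV (L i))
        = (HH ∅ (insert i (L i)) - HH ∅ (L i)) - c i := by
      intro i _
      have hiL : i ∉ L i := by
        rw [hLdef]
        simp
      have hB1 := congr_B1 hP d𝒴 d𝒵 i (L i)
      have hB2 := congr_B2 hP d𝒴 d𝒵 i (L i) hiL
      have hB3 := congr_B3 hP d𝒴 d𝒵 i (L i) hiL
      have hB4 := congr_A4 hP d𝒴 d𝒵 (L i)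
      have hci := CIstep {i} (L i) i (Finset.mem_singleton_self i) hiL
      rw [condMI, hB1, hB2, hB3, hB4]
      simp only [hHH] at hci ⊢
      rw [hci]
      ring
    rw [LHSeq]
    have crux := chain2 I.card I rfl (subset_refl I) (fun j hj _ _ _ => hj)
    rw [Finset.union_comm, Finset.union_compl] at crux
    calc HH ∅ Finset.univ - HH ∅ Iᶜ - ∑ i ∈ I, c i
        ≤ (∑ i ∈ I, (HH ∅ (insert i (L i)) - HH ∅ (L i))) - ∑ i ∈ I, c i := by linarith
      _ = ∑ i ∈ I, ((HH ∅ (insert i (L i)) - HH ∅ (L i)) - c i) := by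
          rw [Finset.sum_sub_distrib, Finset.sum_sub_distrib, Finset.sum_sub_distrib]
      _ = ∑ i ∈ I, condMI P (fun ω : Samp 𝒴 𝒵 V => ω.1 i)
            (fun ω : Samp 𝒴 𝒵 V => ω.2.1 i) (ZbarV (L i)) :=
          (Finset.sum_congr rfl RHSterm).symm
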